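/- For every j₁, j₂ ∈ {0,1,2,3}, the τ-NAF with respect to D̃(j₁,j₂) is unique: if (c_0, …, c_{ℓ−1}) and (b_0, …, b_{m−1}) are both τ-NAFs of the same element α ∈ R with respect to D̃(j₁,j₂), then their zero-padded digit sequences agree, i.e. for every index i, (c_i if i < ℓ else 0) = (b_i if i < m else 0). -/

import Mathlib

set_option maxHeartbeats 1000000


open Polynomial

noncomputable def P (μ : ℤ) : ℤ[X] := X ^ 4 - C μ * X ^ 3 - C (2 * μ) * X + 4

noncomputable abbrev Rg (μ : ℤ) := AdjoinRoot (P μ)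

noncomputable def tau (μ : ℤ) : Rg μ := AdjoinRoot.root (P μ)

noncomputable def Dtil (μ : ℤ) (j₁ j₂ : ℕ) : Set (Rg μ) :=
  {0, 1, -1, 2, -2, 1 + tau μ, 1 - tau μ, -1 + tau μ, -1 - tau μ,
   (-1 : Rg μ) ^ (j₁ / 2) * (2 + tau μ), (-1 : Rg μ) ^ j₁ * (2 - tau μ),
   1 + 2 * (μ : Rg μ) * (-1 : Rg μ) ^ (j₂ / 2) * tau μ,
   -1 + 2 * (μ : Rg μ) * (-1 : Rg μ) ^ j₂ * tau μ}

lemma Pmonic (μ : ℤ) : (P μ).Monic := by unfold P; monicity!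
lemma Pdeg (μ : ℤ) : (P μ).natDegree = 4 := by unfold P; compute_degree!

lemma htau4 (μ : ℤ) : tau μ ^ 4 = μ * tau μ ^ 3 + 2 * μ * tau μ - 4 := by
  have h : AdjoinRoot.mk (P μ) (X ^ 4 - C μ * X ^ 3 - C (2 * μ) * X + 4) = 0 := by
    rw [show X ^ 4 - C μ * X ^ 3 - C (2 * μ) * X + 4 = P μ from rfl, AdjoinRoot.mk_self]
  simp only [map_add, map_sub, map_mul, map_pow, AdjoinRoot.mk_X, AdjoinRoot.mk_C,
    map_ofNat, map_intCast, eq_intCast] at h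
  unfold tau
  push_cast at h ⊢
  linear_combination h

noncomputable def bas (μ : ℤ) : Module.Basis (Fin 4) ℤ (Rg μ) :=
  ((AdjoinRoot.powerBasis' (Pmonic μ)).basis).reindex (finCongr (Pdeg μ))

lemma bas_apply (μ : ℤ) (i : Fin 4) : bas μ i = tau μ ^ (i : ℕ) := by
  rw [bas, Module.Basis.reindex_apply, (AdjoinRoot.powerBasis' (Pmonic μ)).basis_eq_pow]
  simp [AdjoinRoot.powerBasis'_gen, tau]
  rfl

lemma span4 (μ : ℤ) (z : Rg μ) : ∃ a b c d : ℤ,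
    z = a + b * tau μ + c * tau μ ^ 2 + d * tau μ ^ 3 := by
  obtain ⟨a,b,c,d,h⟩ : ∃ a b c d : ℤ,
      (a:ℤ) • bas μ 0 + b • bas μ 1 + c • bas μ 2 + d • bas μ 3 = z :=
    ⟨_,_,_,_, by rw [← Fin.sum_univ_four (fun i => (bas μ).repr z i • bas μ i)]
                 exact (bas μ).sum_repr z⟩
  refine ⟨a,b,c,d, ?_⟩
  rw [← h]
  simp only [bas_apply, zsmul_eq_mul, Fin.val_zero, Fin.val_one, pow_zero, pow_one,
    show ((2 : Fin 4) : ℕ) = 2 from rfl, show ((3 : Fin 4) : ℕ) = 3 from rfl]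
  ring

lemma indep4 (μ : ℤ) (a b c d : ℤ)
    (h : (a : Rg μ) + b * tau μ + c * tau μ ^ 2 + d * tau μ ^ 3 = 0) :
    a = 0 ∧ b = 0 ∧ c = 0 ∧ d = 0 := by
  have hli := Fintype.linearIndependent_iff.mp (bas μ).linearIndependent ![a, b, c, d]
  have h0 : ∑ i, (![a, b, c, d] : Fin 4 → ℤ) i • bas μ i = 0 := by
    rw [Fin.sum_univ_four]
    show (a:ℤ) • bas μ 0 + b • bas μ 1 + c • bas μ 2 + d • bas μ 3 = 0
    simp only [bas_apply, zsmul_eq_mul, Fin.val_zero, Fin.val_one, pow_zero, pow_one,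
      show ((2 : Fin 4) : ℕ) = 2 from rfl, show ((3 : Fin 4) : ℕ) = 3 from rfl]
    linear_combination h
  have hz := hli h0
  exact ⟨hz 0, hz 1, hz 2, hz 3⟩

lemma tau_reg (μ : ℤ) (z w : Rg μ) (h : tau μ * z = tau μ * w) : z = w := by
  obtain ⟨a,b,c,d,hs⟩ := span4 μ (z - w)
  have h2 : ((-4*d : ℤ) : Rg μ) + ((a + 2*μ*d : ℤ)) * tau μ + ((b:ℤ)) * tau μ ^ 2
      + ((c + μ*d : ℤ)) * tau μ ^ 3 = 0 := by
    push_cast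
    linear_combination h - tau μ * hs - (d : Rg μ) * htau4 μ
  obtain ⟨e1, e2, e3, e4⟩ := indep4 μ _ _ _ _ h2
  have hdd : d = 0 := by omega
  subst hdd
  have ha : a = 0 := by simpa using e2
  have hcc : c = 0 := by simpa using e4
  have hz : z - w = 0 := by rw [hs, ha, hcc, e3]; push_cast; ring
  exact sub_eq_zero.mp hz

lemma divtau (μ : ℤ) (x y : ℤ) (h : ∃ β, (x : Rg μ) + y * tau μ = tau μ * β) :
    (4:ℤ) ∣ x := by
  obtain ⟨β, hβ⟩ := h
  obtain ⟨a,b,c,d,hs⟩ := span4 μ β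
  have h2 : ((x + 4*d : ℤ) : Rg μ) + ((y - a - 2*μ*d : ℤ)) * tau μ + ((-b : ℤ)) * tau μ ^ 2
      + ((-c - μ*d : ℤ)) * tau μ ^ 3 = 0 := by
    push_cast
    linear_combination hβ + tau μ * hs + (d : Rg μ) * htau4 μ
  obtain ⟨e1, -, -, -⟩ := indep4 μ _ _ _ _ h2
  exact ⟨-d, by omega⟩

lemma divtau2 (μ : ℤ) (hμ : μ = 1 ∨ μ = -1) (x y : ℤ)
    (h : ∃ β, (x : Rg μ) + y * tau μ = tau μ ^ 2 * β) :
    ∃ u v : ℤ, x = -4*u - 4*μ*v ∧ y = 2*μ*u - 2*v := by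
  obtain ⟨β, hβ⟩ := h
  obtain ⟨a,b,c,d,hs⟩ := span4 μ β
  have h2 : ((x + 4*c + 4*μ*d : ℤ) : Rg μ) + ((y - 2*μ*c + 2*d : ℤ)) * tau μ
      + ((-a - 2*μ*d : ℤ)) * tau μ ^ 2 + ((-b - μ*c - d : ℤ)) * tau μ ^ 3 = 0 := by
    rcases hμ with rfl | rfl
    · push_cast
      linear_combination hβ + tau 1 ^ 2 * hs + ((c : Rg 1) + (d : Rg 1) + (d : Rg 1) * tau 1) * htau4 1
    · push_cast
      linear_combination hβ + tau (-1) ^ 2 * hs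
        + ((c : Rg (-1)) - (d : Rg (-1)) + (d : Rg (-1)) * tau (-1)) * htau4 (-1)
  obtain ⟨e1, e2, -, -⟩ := indep4 μ _ _ _ _ h2
  exact ⟨c, d, by omega, by omega⟩

def Q (μ s₁ s₂ t₁ t₂ x y : ℤ) : Prop :=
  (x=0∧y=0)∨(x=1∧y=0)∨(x=-1∧y=0)∨(x=2∧y=0)∨(x=-2∧y=0)∨(x=1∧y=1)∨(x=1∧y=-1)∨
  (x=-1∧y=1)∨(x=-1∧y=-1)∨(x=2*s₁∧y=s₁)∨(x=2*s₂∧y=-s₂)∨(x=1∧y=2*μ*t₁)∨(x=-1∧y=2*μ*t₂)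

lemma sign_pm (k : ℕ) : ((-1:ℤ)^k = 1 ∨ (-1:ℤ)^k = -1) := by
  rcases Nat.even_or_odd k with h | h
  · exact Or.inl h.neg_one_pow
  · exact Or.inr h.neg_one_pow

lemma memD (μ : ℤ) (j₁ j₂ : ℕ) (d : Rg μ) (hd : d ∈ Dtil μ j₁ j₂) :
    ∃ x y : ℤ, d = (x : Rg μ) + (y : Rg μ) * tau μ ∧
      Q μ ((-1)^(j₁/2)) ((-1)^j₁) ((-1)^(j₂/2)) ((-1)^j₂) x y := by
  simp only [Dtil, Set.mem_insert_iff, Set.mem_singleton_iff] at hd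
  unfold Q
  rcases hd with rfl|rfl|rfl|rfl|rfl|rfl|rfl|rfl|rfl|rfl|rfl|rfl|rfl
  · exact ⟨0, 0, by push_cast; ring, Or.inl ⟨rfl, rfl⟩⟩
  · exact ⟨1, 0, by push_cast; ring, Or.inr (Or.inl ⟨rfl, rfl⟩)⟩
  · exact ⟨-1, 0, by push_cast; ring, Or.inr (Or.inr (Or.inl ⟨rfl, rfl⟩))⟩
  · exact ⟨2, 0, by push_cast; ring, Or.inr (Or.inr (Or.inr (Or.inl ⟨rfl, rfl⟩)))⟩
  · exact ⟨-2, 0, by push_cast; ring, Or.inr (Or.inr (Or.inr (Or.inr (Or.inl ⟨rfl, rfl⟩))))⟩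
  · exact ⟨1, 1, by push_cast; ring, Or.inr (Or.inr (Or.inr (Or.inr (Or.inr (Or.inl ⟨rfl, rfl⟩)))))⟩
  · exact ⟨1, -1, by push_cast; ring, Or.inr (Or.inr (Or.inr (Or.inr (Or.inr (Or.inr (Or.inl ⟨rfl, rfl⟩))))))⟩
  · exact ⟨-1, 1, by push_cast; ring, Or.inr (Or.inr (Or.inr (Or.inr (Or.inr (Or.inr (Or.inr (Or.inl ⟨rfl, rfl⟩)))))))⟩
  · exact ⟨-1, -1, by push_cast; ring, Or.inr (Or.inr (Or.inr (Or.inr (Or.inr (Or.inr (Or.inr (Or.inr (Or.inl ⟨rfl, rfl⟩))))))))⟩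
  · exact ⟨2*(-1)^(j₁/2), (-1)^(j₁/2), by push_cast; ring, Or.inr (Or.inr (Or.inr (Or.inr (Or.inr (Or.inr (Or.inr (Or.inr (Or.inr (Or.inl ⟨rfl, rfl⟩)))))))))⟩
  · exact ⟨2*(-1)^j₁, -(-1)^j₁, by push_cast; ring, Or.inr (Or.inr (Or.inr (Or.inr (Or.inr (Or.inr (Or.inr (Or.inr (Or.inr (Or.inr (Or.inl ⟨rfl, rfl⟩))))))))))⟩
  · exact ⟨1, 2*μ*(-1)^(j₂/2), by push_cast; ring, Or.inr (Or.inr (Or.inr (Or.inr (Or.inr (Or.inr (Or.inr (Or.inr (Or.inr (Or.inr (Or.inr (Or.inl ⟨rfl, rfl⟩)))))))))))⟩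
  · exact ⟨-1, 2*μ*(-1)^j₂, by push_cast; ring, Or.inr (Or.inr (Or.inr (Or.inr (Or.inr (Or.inr (Or.inr (Or.inr (Or.inr (Or.inr (Or.inr (Or.inr (⟨rfl, rfl⟩))))))))))))⟩

lemma key1 (μ s₁ s₂ t₁ t₂ : ℤ) (hμ : μ = 1 ∨ μ = -1)
    (hs₁ : s₁ = 1 ∨ s₁ = -1) (hs₂ : s₂ = 1 ∨ s₂ = -1)
    (ht₁ : t₁ = 1 ∨ t₁ = -1) (ht₂ : t₂ = 1 ∨ t₂ = -1)
    (x y x' y' u v : ℤ)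
    (hQ : Q μ s₁ s₂ t₁ t₂ x y) (hQ' : Q μ s₁ s₂ t₁ t₂ x' y')
    (hne : ¬(x = 0 ∧ y = 0)) (hne' : ¬(x' = 0 ∧ y' = 0))
    (h1 : x - x' = -4*u - 4*μ*v) (h2 : y - y' = 2*μ*u - 2*v) :
    x = x' ∧ y = y' := by
  unfold Q at hQ hQ'
  rcases hμ with rfl | rfl <;> omega

lemma key2 (μ s₁ s₂ t₁ t₂ : ℤ) (hμ : μ = 1 ∨ μ = -1)
    (hs₁ : s₁ = 1 ∨ s₁ = -1) (hs₂ : s₂ = 1 ∨ s₂ = -1)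
    (ht₁ : t₁ = 1 ∨ t₁ = -1) (ht₂ : t₂ = 1 ∨ t₂ = -1)
    (x y : ℤ) (hQ : Q μ s₁ s₂ t₁ t₂ x y) (hne : ¬(x = 0 ∧ y = 0)) :
    ¬ (4 ∣ x) := by
  unfold Q at hQ
  rcases hμ with rfl | rfl <;> omega

lemma dec1 (μ : ℤ) (α : Rg μ) (ℓ : ℕ) (c : ℕ → Rg μ)
    (hsum : α = ∑ i ∈ Finset.range ℓ, c i * tau μ ^ i) :
    α = (if 0 < ℓ then c 0 else 0)
      + tau μ * ∑ i ∈ Finset.range (ℓ - 1), c (i+1) * tau μ ^ i := by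
  cases ℓ with
  | zero => simpa using hsum
  | succ n =>
    rw [if_pos (Nat.succ_pos n)]
    rw [Finset.sum_range_succ'] at hsum
    rw [hsum, Finset.mul_sum]
    simp only [Nat.add_sub_cancel, pow_zero, mul_one, pow_succ]
    rw [add_comm]
    congr 1
    apply Finset.sum_congr rfl
    intro i _
    ring

lemma dec2 (μ : ℤ) (α : Rg μ) (ℓ : ℕ) (c : ℕ → Rg μ)
    (hsum : α = ∑ i ∈ Finset.range ℓ, c i * tau μ ^ i)
    (hnaf : ∀ i, i + 1 < ℓ → c i = 0 ∨ c (i + 1) = 0)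
    (h0 : 0 < ℓ) (hc0 : c 0 ≠ 0) :
    ∃ u, α = c 0 + tau μ ^ 2 * u := by
  match ℓ, h0 with
  | 1, _ => exact ⟨0, by simpa [Finset.sum_range_one] using hsum⟩
  | (n+2), _ =>
    have hc1 : c 1 = 0 := by
      rcases hnaf 0 (by omega) with h | h
      · exact absurd h hc0
      · exact h
    refine ⟨∑ i ∈ Finset.range n, c (i+2) * tau μ ^ i, ?_⟩
    rw [Finset.sum_range_succ', Finset.sum_range_succ'] at hsum
    rw [hsum, Finset.mul_sum]
    simp only [hc1, pow_zero, mul_one, zero_mul, add_zero, zero_add, pow_succ]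
    rw [add_comm]
    congr 1
    apply Finset.sum_congr rfl
    intro i _
    ring

lemma zero_mem_D (μ : ℤ) (j₁ j₂ : ℕ) : (0 : Rg μ) ∈ Dtil μ j₁ j₂ := by
  simp [Dtil]

lemma first_digit (μ : ℤ) (hμ : μ = 1 ∨ μ = -1) (j₁ j₂ : ℕ)
    (α : Rg μ) (ℓ m : ℕ) (c b : ℕ → Rg μ)
    (hc : ∀ i < ℓ, c i ∈ Dtil μ j₁ j₂)
    (hcsum : α = ∑ i ∈ Finset.range ℓ, c i * tau μ ^ i)
    (hcnaf : ∀ i, i + 1 < ℓ → c i = 0 ∨ c (i + 1) = 0)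
    (hb : ∀ i < m, b i ∈ Dtil μ j₁ j₂)
    (hbsum : α = ∑ i ∈ Finset.range m, b i * tau μ ^ i)
    (hbnaf : ∀ i, i + 1 < m → b i = 0 ∨ b (i + 1) = 0) :
    (if 0 < ℓ then c 0 else 0) = (if 0 < m then b 0 else 0) := by
  set C0 := if 0 < ℓ then c 0 else 0 with hC0
  set B0 := if 0 < m then b 0 else 0 with hB0
  have hCD : C0 ∈ Dtil μ j₁ j₂ := by
    rw [hC0]; split_ifs with h
    · exact hc 0 h
    · exact zero_mem_D μ j₁ j₂
  have hBD : B0 ∈ Dtil μ j₁ j₂ := by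
    rw [hB0]; split_ifs with h
    · exact hb 0 h
    · exact zero_mem_D μ j₁ j₂
  obtain ⟨x, y, hxy, hQ⟩ := memD μ j₁ j₂ C0 hCD
  obtain ⟨x', y', hxy', hQ'⟩ := memD μ j₁ j₂ B0 hBD
  have hs₁ := sign_pm (j₁ / 2)
  have hs₂ := sign_pm j₁
  have ht₁ := sign_pm (j₂ / 2)
  have ht₂ := sign_pm j₂
  -- dec2-style facts
  have hdecC : α = C0 + tau μ * ∑ i ∈ Finset.range (ℓ - 1), c (i+1) * tau μ ^ i :=
    dec1 μ α ℓ c hcsum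
  have hdecB : α = B0 + tau μ * ∑ i ∈ Finset.range (m - 1), b (i+1) * tau μ ^ i :=
    dec1 μ α m b hbsum
  by_cases hCz : C0 = 0 <;> by_cases hBz : B0 = 0
  · rw [hCz, hBz]
  · -- C0 = 0, B0 ≠ 0
    exfalso
    have h0m : 0 < m := by by_contra h; exact hBz (by rw [hB0, if_neg h])
    have hb0 : b 0 ≠ 0 := by rwa [hB0, if_pos h0m] at hBz
    obtain ⟨u, hu⟩ := dec2 μ α m b hbsum hbnaf h0m hb0
    have hB0b : B0 = b 0 := by rw [hB0, if_pos h0m]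
    have hdiv : ∃ β, (x' : Rg μ) + (y' : Rg μ) * tau μ = tau μ * β := by
      refine ⟨(∑ i ∈ Finset.range (ℓ - 1), c (i+1) * tau μ ^ i) - tau μ * u, ?_⟩
      linear_combination -hxy' + hB0b - hu + hdecC + hCz
    have h4x : (4:ℤ) ∣ x' := divtau μ x' y' hdiv
    have hne' : ¬(x' = 0 ∧ y' = 0) := by
      rintro ⟨rfl, rfl⟩
      exact hBz (by rw [hxy']; push_cast; ring)
    exact key2 μ _ _ _ _ hμ hs₁ hs₂ ht₁ ht₂ x' y' hQ' hne' h4x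
  · -- C0 ≠ 0, B0 = 0 : symmetric
    exfalso
    have h0l : 0 < ℓ := by by_contra h; exact hCz (by rw [hC0, if_neg h])
    have hc0 : c 0 ≠ 0 := by rwa [hC0, if_pos h0l] at hCz
    obtain ⟨u, hu⟩ := dec2 μ α ℓ c hcsum hcnaf h0l hc0
    have hC0c : C0 = c 0 := by rw [hC0, if_pos h0l]
    have hdiv : ∃ β, (x : Rg μ) + (y : Rg μ) * tau μ = tau μ * β := by
      refine ⟨(∑ i ∈ Finset.range (m - 1), b (i+1) * tau μ ^ i) - tau μ * u, ?_⟩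
      linear_combination -hxy + hC0c - hu + hdecB + hBz
    have h4x : (4:ℤ) ∣ x := divtau μ x y hdiv
    have hne : ¬(x = 0 ∧ y = 0) := by
      rintro ⟨rfl, rfl⟩
      exact hCz (by rw [hxy]; push_cast; ring)
    exact key2 μ _ _ _ _ hμ hs₁ hs₂ ht₁ ht₂ x y hQ hne h4x
  · -- both nonzero
    have h0l : 0 < ℓ := by by_contra h; exact hCz (by rw [hC0, if_neg h])
    have hc0 : c 0 ≠ 0 := by rwa [hC0, if_pos h0l] at hCz
    have h0m : 0 < m := by by_contra h; exact hBz (by rw [hB0, if_neg h])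
    have hb0 : b 0 ≠ 0 := by rwa [hB0, if_pos h0m] at hBz
    obtain ⟨u, hu⟩ := dec2 μ α ℓ c hcsum hcnaf h0l hc0
    obtain ⟨v, hv⟩ := dec2 μ α m b hbsum hbnaf h0m hb0
    have hC0c : C0 = c 0 := by rw [hC0, if_pos h0l]
    have hB0b : B0 = b 0 := by rw [hB0, if_pos h0m]
    have hdiv : ∃ β, ((x - x' : ℤ) : Rg μ) + ((y - y' : ℤ) : Rg μ) * tau μ = tau μ ^ 2 * β := by
      refine ⟨v - u, ?_⟩
      push_cast
      have h1 : c 0 + tau μ ^ 2 * u = b 0 + tau μ ^ 2 * v := by rw [← hu, ← hv]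
      rw [hC0c] at hxy; rw [hB0b] at hxy'
      linear_combination h1 - hxy + hxy'
    obtain ⟨u', v', h1, h2⟩ := divtau2 μ hμ (x - x') (y - y') hdiv
    have hne : ¬(x = 0 ∧ y = 0) := by
      rintro ⟨rfl, rfl⟩
      exact hCz (by rw [hxy]; push_cast; ring)
    have hne' : ¬(x' = 0 ∧ y' = 0) := by
      rintro ⟨rfl, rfl⟩
      exact hBz (by rw [hxy']; push_cast; ring)
    obtain ⟨hx, hy⟩ := key1 μ _ _ _ _ hμ hs₁ hs₂ ht₁ ht₂ x y x' y' u' v' hQ hQ' hne hne' h1 h2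
    rw [hxy, hxy', hx, hy]

lemma mainaux (μ : ℤ) (hμ : μ = 1 ∨ μ = -1) (j₁ j₂ : ℕ) :
    ∀ n ℓ m, ℓ + m ≤ n → ∀ (α : Rg μ) (c b : ℕ → Rg μ),
    (∀ i < ℓ, c i ∈ Dtil μ j₁ j₂) →
    α = (∑ i ∈ Finset.range ℓ, c i * tau μ ^ i) →
    (∀ i, i + 1 < ℓ → c i = 0 ∨ c (i + 1) = 0) →
    (∀ i < m, b i ∈ Dtil μ j₁ j₂) →
    α = (∑ i ∈ Finset.range m, b i * tau μ ^ i) →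
    (∀ i, i + 1 < m → b i = 0 ∨ b (i + 1) = 0) →
    ∀ i, (if i < ℓ then c i else 0) = (if i < m then b i else 0) := by
  intro n
  induction n with
  | zero =>
    intro ℓ m hlm α c b _ _ _ _ _ _ i
    have hℓ : ℓ = 0 := by omega
    have hm : m = 0 := by omega
    subst hℓ; subst hm
    simp
  | succ n ih =>
    intro ℓ m hlm α c b hc hcsum hcnaf hb hbsum hbnaf
    have hfirst := first_digit μ hμ j₁ j₂ α ℓ m c b hc hcsum hcnaf hb hbsum hbnaf
    have hdecC := dec1 μ α ℓ c hcsum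
    have hdecB := dec1 μ α m b hbsum
    have htail : (∑ i ∈ Finset.range (ℓ - 1), c (i+1) * tau μ ^ i)
        = (∑ i ∈ Finset.range (m - 1), b (i+1) * tau μ ^ i) := by
      apply tau_reg μ
      have := hdecC.symm.trans hdecB
      rw [hfirst] at this
      exact (add_right_inj _).mp this
    have ihr := ih (ℓ - 1) (m - 1) (by omega)
      (∑ i ∈ Finset.range (ℓ - 1), c (i+1) * tau μ ^ i)
      (fun i => c (i+1)) (fun i => b (i+1))
      (fun i hi => hc (i+1) (by omega)) rfl
      (fun i hi => hcnaf (i+1) (by omega))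
      (fun i hi => hb (i+1) (by omega)) htail
      (fun i hi => hbnaf (i+1) (by omega))
    intro i
    cases i with
    | zero => exact hfirst
    | succ i =>
      have := ihr i
      rw [if_congr (show i + 1 < ℓ ↔ i < ℓ - 1 by omega) rfl rfl,
          if_congr (show i + 1 < m ↔ i < m - 1 by omega) rfl rfl]
      exact this


/-- Uniqueness of the τ-NAF: two τ-NAFs of the same `α ∈ R` with respect to the
digit set `D̃(j₁,j₂)` have identical zero-padded digit sequences. -/
theorem stmt8 (μ : ℤ) (hμ : μ = 1 ∨ μ = -1) (j₁ j₂ : ℕ) (hj₁ : j₁ < 4) (hj₂ : j₂ < 4)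
    (α : Rg μ) (ℓ m : ℕ) (c b : ℕ → Rg μ)
    (hc : ∀ i < ℓ, c i ∈ Dtil μ j₁ j₂)
    (hcsum : α = ∑ i ∈ Finset.range ℓ, c i * tau μ ^ i)
    (hcnaf : ∀ i, i + 1 < ℓ → c i = 0 ∨ c (i + 1) = 0)
    (hb : ∀ i < m, b i ∈ Dtil μ j₁ j₂)
    (hbsum : α = ∑ i ∈ Finset.range m, b i * tau μ ^ i)
    (hbnaf : ∀ i, i + 1 < m → b i = 0 ∨ b (i + 1) = 0) :
    ∀ i, (if i < ℓ then c i else 0) = (if i < m then b i else 0) :=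
  mainaux μ hμ j₁ j₂ (ℓ + m) ℓ m le_rfl α c b hc hcsum hcnaf hb hbsum hbnaf
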